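/- For a cycle C_n with vertices s_1,…,s_n in cyclic order and any full m-fold cover H = (L,H) of C_n, the subcover corresponding to the path C_n − {s_1s_2} admits a canonical labeling, and for any p_1 ∈ L(s_1), p_2 ∈ L(s_2) with p_1p_2 ∉ E(H), the count N({p_1,p_2}, H) equals either P(C_n,m)/(m(m-1)) or P(C_{n-1},m)/m, according to whether the corresponding canonical indices of p_1 and p_2 differ or agree. -/

import Mathlib

open SimpleGraph

/-- An `m`-fold cover of a graph `G`, with lists canonically labeled by `Fin m`. -/
structure DPCover {V : Type} (G : SimpleGraph V) (m : ℕ) where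
  H : SimpleGraph (V × Fin m)
  part_complete : ∀ (v : V) (a b : Fin m), a ≠ b → H.Adj (v, a) (v, b)
  cross : ∀ (u v : V) (a b : Fin m), u ≠ v → H.Adj (u, a) (v, b) → G.Adj u v
  matching_right : ∀ (u v : V) (a b b' : Fin m), u ≠ v →
    H.Adj (u, a) (v, b) → H.Adj (u, a) (v, b') → b = b'
  matching_left : ∀ (u v : V) (a a' b : Fin m), u ≠ v →
    H.Adj (u, a) (v, b) → H.Adj (u, a') (v, b) → a = a'

/-- A cover is full if every matching between lists of adjacent vertices is perfect. -/
def DPCover.IsFull {V : Type} {G : SimpleGraph V} {m : ℕ} (C : DPCover G m) : Prop :=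
  ∀ u v : V, G.Adj u v → ∀ a : Fin m, ∃ b : Fin m, C.H.Adj (u, a) (v, b)

/-- An `H`-coloring: a choice of one list element per vertex forming an independent set. -/
def DPCover.IsColoring {V : Type} {G : SimpleGraph V} {m : ℕ} (C : DPCover G m)
    (c : V → Fin m) : Prop :=
  ∀ u v : V, ¬ C.H.Adj (u, c u) (v, c v)

/-- The number of `H`-colorings of `G` with respect to the cover `C`. -/
noncomputable def dpCount {V : Type} {G : SimpleGraph V} {m : ℕ} (C : DPCover G m) : ℕ :=
  Nat.card {c : V → Fin m // C.IsColoring c}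

/-- `N(P, C)`: the number of `H`-colorings containing the set `P` of cover vertices. -/
noncomputable def NCount {V : Type} {G : SimpleGraph V} {m : ℕ} (C : DPCover G m)
    (P : Set (V × Fin m)) : ℕ :=
  Nat.card {c : V → Fin m // C.IsColoring c ∧ ∀ p ∈ P, c p.1 = p.2}

/-- The DP color function: minimum number of colorings over all `m`-fold covers. -/
noncomputable def PDP {V : Type} (G : SimpleGraph V) (m : ℕ) : ℕ :=
  sInf {n : ℕ | ∃ C : DPCover G m, dpCount C = n}

/-- The number of proper `m`-colorings (the chromatic polynomial evaluated at `m`). -/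
noncomputable def properCount {V : Type} (G : SimpleGraph V) (m : ℕ) : ℕ :=
  Nat.card {c : V → Fin m // ∀ u v : V, G.Adj u v → c u ≠ c v}

/-- A cover has a canonical labeling if lists can be renamed so all cross edges are
`(u,j)(v,j)`. -/
def DPCover.HasCanonicalLabeling {V : Type} {G : SimpleGraph V} {m : ℕ}
    (C : DPCover G m) : Prop :=
  ∃ σ : V → Equiv.Perm (Fin m), ∀ u v : V, G.Adj u v → ∀ j : Fin m,
    C.H.Adj (u, σ u j) (v, σ v j)

lemma pair_perm {M : ℕ} {x y x' y' : Fin M} (hxy : x ≠ y) (hxy' : x' ≠ y') :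
    ∃ π : Equiv.Perm (Fin M), π x = x' ∧ π y = y' := by
  set s := Equiv.swap x x' with hs
  have h1 : s x = x' := Equiv.swap_apply_left x x'
  have h2 : x' ≠ s y := by
    intro h
    exact hxy (s.injective (h1.trans h))
  exact ⟨s.trans (Equiv.swap (s y) y'), by
    simp only [Equiv.trans_apply, h1, Equiv.swap_apply_of_ne_of_ne h2 hxy'],
    by simp only [Equiv.trans_apply, Equiv.swap_apply_left]⟩

-- perm-equivariance equiv on subtypes with two pinned values
def permEquiv {N M : ℕ} (Q : (Fin N → Fin M) → Prop)
    (hQ : ∀ (π : Equiv.Perm (Fin M)) d, Q d → Q (⇑π ∘ d)) (π : Equiv.Perm (Fin M))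
    (u v : Fin N) (x y : Fin M) :
    {d : Fin N → Fin M // Q d ∧ d u = x ∧ d v = y} ≃
      {d : Fin N → Fin M // Q d ∧ d u = π x ∧ d v = π y} where
  toFun d := ⟨⇑π ∘ d.1, hQ π d.1 d.2.1, by simp [d.2.2.1], by simp [d.2.2.2]⟩
  invFun d := ⟨⇑π.symm ∘ d.1, hQ π.symm d.1 d.2.1, by simp [d.2.2.1], by simp [d.2.2.2]⟩
  left_inv d := Subtype.ext (funext fun i => π.symm_apply_apply _)
  right_inv d := Subtype.ext (funext fun i => π.apply_symm_apply _)

lemma pair_card {N M : ℕ} (Q : (Fin N → Fin M) → Prop)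
    (hQ : ∀ (π : Equiv.Perm (Fin M)) d, Q d → Q (⇑π ∘ d))
    (u v : Fin N) (x y : Fin M) (hxy : x ≠ y) :
    Nat.card {d : Fin N → Fin M // Q d ∧ d u ≠ d v} =
      (M * (M - 1)) * Nat.card {d : Fin N → Fin M // Q d ∧ d u = x ∧ d v = y} := by
  classical
  set f : {d : Fin N → Fin M // Q d ∧ d u ≠ d v} → {p : Fin M × Fin M // p.1 ≠ p.2} :=
    fun d => ⟨(d.1 u, d.1 v), d.2.2⟩ with hf
  have e1 : ∀ p : {p : Fin M × Fin M // p.1 ≠ p.2},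
      {a // f a = p} ≃ {d : Fin N → Fin M // Q d ∧ d u = p.1.1 ∧ d v = p.1.2} := by
    intro p
    refine ⟨fun a => ⟨a.1.1, a.1.2.1, ?_, ?_⟩, fun d => ⟨⟨d.1, d.2.1, ?_⟩, ?_⟩, ?_, ?_⟩
    · have := congrArg (fun q => q.1.1) a.2; exact this
    · have := congrArg (fun q => q.1.2) a.2; exact this
    · rw [d.2.2.1, d.2.2.2]; exact p.2
    · apply Subtype.ext; exact Prod.ext d.2.2.1 d.2.2.2
    · intro a; apply Subtype.ext; apply Subtype.ext; rfl
    · intro d; rfl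
  have e2 : ∀ p : {p : Fin M × Fin M // p.1 ≠ p.2},
      Nat.card {d : Fin N → Fin M // Q d ∧ d u = p.1.1 ∧ d v = p.1.2} =
        Nat.card {d : Fin N → Fin M // Q d ∧ d u = x ∧ d v = y} := by
    intro p
    obtain ⟨π, h1, h2⟩ := pair_perm hxy p.2
    rw [Nat.card_congr (permEquiv Q hQ π u v x y)]
    rw [h1, h2]
  have hcard : Nat.card {p : Fin M × Fin M // p.1 ≠ p.2} = M * (M - 1) := by
    rw [Nat.card_eq_fintype_card, Fintype.card_subtype_compl (p := fun p : Fin M × Fin M => p.1 = p.2)]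
    have : Fintype.card {p : Fin M × Fin M // p.1 = p.2} = M := by
      rw [Fintype.card_congr (⟨fun p => p.1.1, fun a => ⟨(a, a), rfl⟩,
        fun p => Subtype.ext (by obtain ⟨⟨a, b⟩, h⟩ := p; cases h; rfl), fun a => rfl⟩ :
        {p : Fin M × Fin M // p.1 = p.2} ≃ Fin M), Fintype.card_fin]
    rw [this, Fintype.card_prod, Fintype.card_fin]
    cases M with
    | zero => rfl
    | succ m => rw [Nat.succ_sub_one, Nat.mul_succ]; omega
  calc Nat.card {d : Fin N → Fin M // Q d ∧ d u ≠ d v}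
      = Nat.card (Σ p : {p : Fin M × Fin M // p.1 ≠ p.2}, {a // f a = p}) :=
        (Nat.card_congr (Equiv.sigmaFiberEquiv f)).symm
    _ = ∑ p : {p : Fin M × Fin M // p.1 ≠ p.2}, Nat.card {a // f a = p} := by
        rw [Nat.card_eq_fintype_card, Fintype.card_sigma]
        exact Finset.sum_congr rfl fun p _ => (Nat.card_eq_fintype_card).symm
    _ = M * (M - 1) * Nat.card {d : Fin N → Fin M // Q d ∧ d u = x ∧ d v = y} := by
        have hconst : ∀ p : {p : Fin M × Fin M // p.1 ≠ p.2}, Nat.card {a // f a = p} =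
            Nat.card {d : Fin N → Fin M // Q d ∧ d u = x ∧ d v = y} :=
          fun p => (Nat.card_congr (e1 p)).trans (e2 p)
        rw [Finset.sum_congr rfl fun p _ => hconst p, Finset.sum_const, Finset.card_univ,
          smul_eq_mul, ← Nat.card_eq_fintype_card, hcard]

def permEquiv1 {N M : ℕ} (Q : (Fin N → Fin M) → Prop)
    (hQ : ∀ (π : Equiv.Perm (Fin M)) d, Q d → Q (⇑π ∘ d)) (π : Equiv.Perm (Fin M))
    (u : Fin N) (x : Fin M) :
    {d : Fin N → Fin M // Q d ∧ d u = x} ≃ {d : Fin N → Fin M // Q d ∧ d u = π x} where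
  toFun d := ⟨⇑π ∘ d.1, hQ π d.1 d.2.1, by simp [d.2.2]⟩
  invFun d := ⟨⇑π.symm ∘ d.1, hQ π.symm d.1 d.2.1, by simp [d.2.2]⟩
  left_inv d := Subtype.ext (funext fun i => π.symm_apply_apply _)
  right_inv d := Subtype.ext (funext fun i => π.apply_symm_apply _)

lemma single_card {N M : ℕ} (Q : (Fin N → Fin M) → Prop)
    (hQ : ∀ (π : Equiv.Perm (Fin M)) d, Q d → Q (⇑π ∘ d)) (u : Fin N) (x : Fin M) :
    Nat.card {d : Fin N → Fin M // Q d} = M * Nat.card {d : Fin N → Fin M // Q d ∧ d u = x} := by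
  classical
  set f : {d : Fin N → Fin M // Q d} → Fin M := fun d => d.1 u with hf
  have e1 : ∀ p : Fin M, {a // f a = p} ≃ {d : Fin N → Fin M // Q d ∧ d u = p} :=
    fun p => ⟨fun a => ⟨a.1.1, a.1.2, a.2⟩, fun d => ⟨⟨d.1, d.2.1⟩, d.2.2⟩,
      fun a => Subtype.ext (Subtype.ext rfl), fun d => rfl⟩
  have e2 : ∀ p : Fin M, Nat.card {d : Fin N → Fin M // Q d ∧ d u = p} =
      Nat.card {d : Fin N → Fin M // Q d ∧ d u = x} := by
    intro p
    have := Nat.card_congr (permEquiv1 Q hQ (Equiv.swap x p) u x)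
    rw [Equiv.swap_apply_left] at this
    exact this.symm
  calc Nat.card {d : Fin N → Fin M // Q d}
      = Nat.card (Σ p : Fin M, {a // f a = p}) := (Nat.card_congr (Equiv.sigmaFiberEquiv f)).symm
    _ = ∑ p : Fin M, Nat.card {a // f a = p} := by
        rw [Nat.card_eq_fintype_card, Fintype.card_sigma]
        exact Finset.sum_congr rfl fun p _ => (Nat.card_eq_fintype_card).symm
    _ = M * Nat.card {d : Fin N → Fin M // Q d ∧ d u = x} := by
        have hconst : ∀ p : Fin M, Nat.card {a // f a = p} =
            Nat.card {d : Fin N → Fin M // Q d ∧ d u = x} :=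
          fun p => (Nat.card_congr (e1 p)).trans (e2 p)
        rw [Finset.sum_congr rfl fun p _ => hconst p, Finset.sum_const, Finset.card_univ,
          smul_eq_mul, Fintype.card_fin]

open SimpleGraph Fin.CommRing Fin.NatCast

lemma adj_iff {k : ℕ} {u v : Fin (k+2)} :
    (cycleGraph (k+2)).Adj u v ↔ v = u + 1 ∨ u = v + 1 := by
  rw [cycleGraph_adj]
  constructor
  · rintro (h | h)
    · exact Or.inr ((sub_eq_iff_eq_add.mp h).trans (add_comm 1 v))
    · exact Or.inl ((sub_eq_iff_eq_add.mp h).trans (add_comm 1 u))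
  · rintro (h | h)
    · exact Or.inr (by rw [h]; ring)
    · exact Or.inl (by rw [h]; ring)
lemma cycle_proper_iff {k m : ℕ} (d : Fin (k+2) → Fin m) :
    (∀ u v : Fin (k+2), (cycleGraph (k+2)).Adj u v → d u ≠ d v) ↔
      ∀ i : Fin (k+2), d (i+1) ≠ d i := by
  constructor
  · intro h i
    exact h _ _ (adj_iff.mpr (Or.inr rfl))
  · intro h u v hadj
    rcases adj_iff.mp hadj with h1 | h1
    · exact (h1 ▸ h u).symm
    · exact h1 ▸ h v

lemma succ_add_one_of_lt {k : ℕ} {i : Fin (k+2)} (h : i.val < k+1) :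
    (i+1).succ = i.succ + 1 := by
  apply Fin.ext
  simp only [Fin.val_succ, Fin.val_add, Fin.val_one]
  rw [Nat.mod_eq_of_lt (by omega), Nat.mod_eq_of_lt (by omega)]

lemma add_one_of_last {k : ℕ} {i : Fin (k+2)} (h : i.val = k+1) : i + 1 = 0 := by
  apply Fin.ext
  simp only [Fin.val_add, Fin.val_one, Fin.val_zero, h]
  simp

lemma succ_add_one_of_last {k : ℕ} {i : Fin (k+2)} (h : i.val = k+1) :
    i.succ + 1 = (0 : Fin (k+3)) := by
  apply Fin.ext
  simp only [Fin.val_add, Fin.val_succ, Fin.val_one, Fin.val_zero, h]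
  simp

def contractEquiv {k m : ℕ} (j : Fin m) :
    {d : Fin (k+3) → Fin m // (∀ i : Fin (k+3), i ≠ 0 → d (i+1) ≠ d i) ∧ d 0 = j ∧ d 1 = j} ≃
    {e : Fin (k+2) → Fin m // (∀ i : Fin (k+2), e (i+1) ≠ e i) ∧ e 0 = j} where
  toFun d := ⟨fun i => d.1 i.succ, by
    constructor
    · intro i
      show d.1 (i+1).succ ≠ d.1 i.succ
      rcases Nat.lt_or_ge i.val (k+1) with h | h
      · rw [succ_add_one_of_lt h]
        exact d.2.1 i.succ (Fin.succ_ne_zero i)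
      · have h' : i.val = k+1 := by omega
        rw [add_one_of_last h', Fin.succ_zero_eq_one]
        have h2 := d.2.1 i.succ (Fin.succ_ne_zero i)
        rw [succ_add_one_of_last h'] at h2
        rw [d.2.2.2]
        intro hq
        exact h2 (d.2.2.1.trans hq)
    · show d.1 (0 : Fin (k+2)).succ = j
      rw [Fin.succ_zero_eq_one]
      exact d.2.2.2⟩
  invFun e := ⟨Fin.cases j e.1, by
    refine ⟨?_, by simp, ?_⟩
    · intro i hi
      induction i using Fin.cases with
      | zero => exact absurd rfl hi
      | succ w =>
        show Fin.cases (motive := fun _ => Fin m) j e.1 (w.succ + 1) ≠ Fin.cases (motive := fun _ => Fin m) j e.1 w.succ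
        rw [Fin.cases_succ]
        rcases Nat.lt_or_ge w.val (k+1) with h | h
        · rw [← succ_add_one_of_lt h, Fin.cases_succ]
          exact e.2.1 w
        · have h' : w.val = k+1 := by omega
          rw [succ_add_one_of_last h', Fin.cases_zero]
          have h2 := e.2.1 w
          rw [add_one_of_last h'] at h2
          intro hq
          exact h2 (e.2.2.trans hq)
    · show Fin.cases (motive := fun _ => Fin m) j e.1 (1 : Fin (k+3)) = j
      rw [show (1 : Fin (k+3)) = (0 : Fin (k+2)).succ from rfl, Fin.cases_succ]
      exact e.2.2⟩
  left_inv d := by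
    apply Subtype.ext
    funext i
    induction i using Fin.cases with
    | zero => exact d.2.2.1.symm
    | succ w => show Fin.cases (motive := fun _ => Fin m) j (fun i => d.1 i.succ) w.succ = d.1 w.succ; rw [Fin.cases_succ]
  right_inv e := by
    apply Subtype.ext
    funext i
    show Fin.cases (motive := fun _ => Fin m) j e.1 i.succ = e.1 i
    rw [Fin.cases_succ]


def Pp (k m : ℕ) (d : Fin (k+3) → Fin m) : Prop := ∀ i : Fin (k+3), i ≠ 0 → d (i+1) ≠ d i

lemma pp_split {k m : ℕ} (d : Fin (k+3) → Fin m) :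
    (∀ i : Fin (k+3), d (i+1) ≠ d i) ↔ Pp k m d ∧ d 1 ≠ d 0 := by
  constructor
  · exact fun h => ⟨fun i _ => h i, by have := h 0; rwa [zero_add] at this⟩
  · rintro ⟨h1, h2⟩ i
    by_cases hi : i = 0
    · subst hi; rwa [zero_add]
    · exact h1 i hi

lemma pp_inv {k m : ℕ} (π : Equiv.Perm (Fin m)) (d : Fin (k+3) → Fin m) (hd : Pp k m d) :
    Pp k m (⇑π ∘ d) := fun i hi heq => hd i hi (π.injective heq)

def contractEquiv' {k m : ℕ} (j : Fin m) :
    {d : Fin (k+3) → Fin m // Pp k m d ∧ d 0 = j ∧ d 1 = j} ≃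
    {e : Fin (k+2) → Fin m // (∀ i : Fin (k+2), e (i+1) ≠ e i) ∧ e 0 = j} := contractEquiv j

def colEquiv {N M : ℕ} (P1 P2 : (Fin N → Fin M) → Prop)
    (σ : Fin N → Equiv.Perm (Fin M)) (h : ∀ c, P1 c ↔ P2 (fun i => (σ i).symm (c i))) :
    {c : Fin N → Fin M // P1 c} ≃ {d : Fin N → Fin M // P2 d} where
  toFun c := ⟨fun i => (σ i).symm (c.1 i), (h c.1).mp c.2⟩
  invFun d := ⟨fun i => σ i (d.1 i), (h _).mpr (by
    have he : (fun i => (σ i).symm ((fun i => σ i (d.1 i)) i)) = d.1 :=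
      funext fun i => (σ i).symm_apply_apply _
    rw [he]
    exact d.2)⟩
  left_inv c := Subtype.ext (funext fun i => (σ i).apply_symm_apply _)
  right_inv d := Subtype.ext (funext fun i => (σ i).symm_apply_apply _)


theorem cycle_cover_NCount {n m : ℕ} (hn : 3 ≤ n) (hm : 2 ≤ m)
    (C : DPCover (SimpleGraph.cycleGraph n) m) (hfull : C.IsFull) :
    ∃ σ : Fin n → Equiv.Perm (Fin m),
      -- a canonical labeling of the subcover corresponding to the path `Cₙ − s₁s₂`:
      (∀ i i' : Fin n, (SimpleGraph.cycleGraph n).Adj i i' →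
        ¬ ((i = ⟨0, by omega⟩ ∧ i' = ⟨1, by omega⟩) ∨
           (i = ⟨1, by omega⟩ ∧ i' = ⟨0, by omega⟩)) →
        ∀ j : Fin m, C.H.Adj (i, σ i j) (i', σ i' j)) ∧
      -- the counts, according to whether the canonical indices differ or agree:
      (∀ a b : Fin m, ¬ C.H.Adj ((⟨0, by omega⟩ : Fin n), a) (⟨1, by omega⟩, b) →
        (((σ ⟨0, by omega⟩).symm a ≠ (σ ⟨1, by omega⟩).symm b →
          NCount C ({((⟨0, by omega⟩ : Fin n), a), (⟨1, by omega⟩, b)} :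
              Set (Fin n × Fin m)) * (m * (m - 1)) =
            properCount (SimpleGraph.cycleGraph n) m) ∧
        ((σ ⟨0, by omega⟩).symm a = (σ ⟨1, by omega⟩).symm b →
          NCount C ({((⟨0, by omega⟩ : Fin n), a), (⟨1, by omega⟩, b)} :
              Set (Fin n × Fin m)) * m =
            properCount (SimpleGraph.cycleGraph (n - 1)) m))) := by
  obtain ⟨k, rfl⟩ : ∃ k, n = k + 3 := ⟨n - 3, by omega⟩
  simp only [show (⟨0, by omega⟩ : Fin (k+3)) = 0 from rfl, show (⟨1, by omega⟩ : Fin (k+3)) = 1 from rfl]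
  -- the matching permutations
  have hE : ∀ u v : Fin (k+3), (cycleGraph (k+3)).Adj u v →
      ∃ e : Equiv.Perm (Fin m), ∀ x y, (C.H.Adj (u, x) (v, y) ↔ y = e x) := by
    intro u v hadj
    choose f hf using hfull u v hadj
    have hinj : Function.Injective f := fun a a' h =>
      C.matching_left u v a a' (f a) hadj.ne (hf a) (by rw [h]; exact hf a')
    refine ⟨Equiv.ofBijective f (Finite.injective_iff_bijective.mp hinj), fun x y => ⟨?_, ?_⟩⟩
    · intro h
      exact C.matching_right u v x y (f x) hadj.ne h (hf x)
    · rintro rfl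
      exact hf x
  choose E hEspec using hE
  -- the vertices along the path, starting at vertex 1
  set vt : ℕ → Fin (k+3) := fun j => ((j+1 : ℕ) : Fin (k+3)) with hvt
  have hvt_val : ∀ j, (vt j).val = (j+1) % (k+3) := fun j => Fin.val_natCast _ _
  have hvt_succ : ∀ j, vt (j+1) = vt j + 1 := by
    intro j
    show ((j+1+1 : ℕ) : Fin (k+3)) = ((j+1 : ℕ) : Fin (k+3)) + 1
    push_cast
    ring
  have hadj_vt : ∀ j, (cycleGraph (k+3)).Adj (vt j) (vt (j+1)) := fun j =>
    adj_iff.mpr (Or.inl (hvt_succ j))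
  have hvt0 : vt (k+2) = 0 := by
    apply Fin.ext
    rw [hvt_val]
    simp
  have hvt1 : vt (k+3) = 1 := by
    apply Fin.ext
    rw [hvt_val, Fin.val_one]
    rw [show k+3+1 = 1 + (k+3) by ring, Nat.add_mod_right, Nat.mod_eq_of_lt (by omega)]
  have hvt_ne : ∀ j < k+2, vt j ≠ 0 := by
    intro j hj h
    have := congrArg Fin.val h
    rw [hvt_val, Fin.val_zero, Nat.mod_eq_of_lt (by omega)] at this
    omega
  have hsurj : ∀ u : Fin (k+3), ∃ j ≤ k+2, vt j = u ∧ vt (j+1) = u + 1 := by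
    intro u
    refine ⟨(u.val + (k+2)) % (k+3), by have := Nat.mod_lt (u.val + (k+2)) (y := k+3) (by omega); omega, ?_, ?_⟩
    · apply Fin.ext
      rw [hvt_val, Nat.mod_add_mod, show u.val + (k+2) + 1 = u.val + (k+3) by ring,
        Nat.add_mod_right, Nat.mod_eq_of_lt u.isLt]
    · rw [hvt_succ]
      congr 1
      apply Fin.ext
      rw [hvt_val, Nat.mod_add_mod, show u.val + (k+2) + 1 = u.val + (k+3) by ring,
        Nat.add_mod_right, Nat.mod_eq_of_lt u.isLt]
  -- the matchings along the path, and the canonical permutations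
  set M : ℕ → Equiv.Perm (Fin m) := fun j => E (vt j) (vt (j+1)) (hadj_vt j) with hMdef
  have hM : ∀ (j : ℕ) x y, C.H.Adj (vt j, x) (vt (j+1), y) ↔ y = M j x := fun j =>
    hEspec (vt j) (vt (j+1)) (hadj_vt j)
  set ρ : ℕ → Equiv.Perm (Fin m) :=
    fun j => Nat.rec (motive := fun _ => Equiv.Perm (Fin m)) 1 (fun i p => M i * p) j with hρ
  set σ : Fin (k+3) → Equiv.Perm (Fin m) := fun i => ρ ((i.val + (k+2)) % (k+3)) with hσ
  have hσv : ∀ j ≤ k+2, σ (vt j) = ρ j := by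
    intro j hj
    show ρ (((vt j).val + (k+2)) % (k+3)) = ρ j
    congr 1
    rw [hvt_val]
    rcases Nat.lt_or_ge j (k+2) with h | h
    · rw [Nat.mod_eq_of_lt (show j+1 < k+3 by omega), show j+1+(k+2) = j + (k+3) from by ring,
        Nat.add_mod_right, Nat.mod_eq_of_lt (show j < k+3 by omega)]
    · have hj' : j = k+2 := by omega
      subst hj'
      rw [Nat.mod_self, Nat.zero_add, Nat.mod_eq_of_lt (by omega)]
  have hcomp : ∀ j ≤ k+1, σ (vt (j+1)) = M j * σ (vt j) := by
    intro j hj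
    rw [hσv j (by omega), hσv (j+1) (by omega)]
  -- canonical labeling on directed path edges
  have hA : ∀ j ≤ k+1, ∀ x, C.H.Adj (vt j, σ (vt j) x) (vt (j+1), σ (vt (j+1)) x) := by
    intro j hj x
    refine (hM j _ _).mpr ?_
    rw [hcomp j hj]
    rfl
  -- characterization of colorings
  have hcol : ∀ c : Fin (k+3) → Fin m,
      C.IsColoring c ↔ ∀ j ≤ k+2, c (vt (j+1)) ≠ M j (c (vt j)) := by
    intro c
    constructor
    · intro h j _ heq
      exact h (vt j) (vt (j+1)) ((hM j _ _).mpr heq)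
    · intro h u v
      by_cases huv : u = v
      · subst huv
        exact C.H.irrefl
      by_cases hadj : (cycleGraph (k+3)).Adj u v
      · rcases adj_iff.mp hadj with h1 | h1
        · obtain ⟨j, hj, hj1, hj2⟩ := hsurj u
          intro hAdj
          refine h j hj ((hM j _ _).mp ?_)
          rw [hj1, hj2, ← h1]
          exact hAdj
        · obtain ⟨j, hj, hj1, hj2⟩ := hsurj v
          intro hAdj
          refine h j hj ((hM j _ _).mp ?_)
          rw [hj1, hj2, ← h1]
          exact hAdj.symm
      · intro hAdj
        exact hadj (C.cross u v _ _ huv hAdj)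
  have hdir : ∀ i i' : Fin (k+3), i' = i + 1 → ¬(i = 0 ∧ i' = 1) →
      ∀ x, C.H.Adj (i, σ i x) (i', σ i' x) := by
    intro i i' h1 hne x
    obtain ⟨j, hj, hj1, hj2⟩ := hsurj i
    have hjlt : j ≤ k+1 := by
      rcases Nat.lt_or_ge j (k+2) with h | h
      · omega
      · exfalso
        apply hne
        have hi0 : i = 0 := by rw [← hj1, show j = k+2 by omega, hvt0]
        exact ⟨hi0, by rw [h1, hi0, zero_add]⟩
    have hAx := hA j hjlt x
    rw [hj1, hj2] at hAx
    rw [h1]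
    exact hAx
  refine ⟨σ, ?_, ?_⟩
  · -- canonical labeling claim
    intro i i' hadj hne x
    rcases adj_iff.mp hadj with h | h
    · exact hdir i i' h (fun ⟨ha, hb⟩ => hne (Or.inl ⟨ha, hb⟩)) x
    · exact (hdir i' i h (fun ⟨ha, hb⟩ => hne (Or.inr ⟨hb, ha⟩)) x).symm
  · -- counting claim
    intro a b hab
    have hedge : b ≠ M (k+2) a := by
      intro h
      apply hab
      have := (hM (k+2) a b).mpr h
      rwa [hvt0, hvt1] at this
    set j0 := (σ 0).symm a with hj0
    set j1 := (σ 1).symm b with hj1def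
    have main_iff : ∀ c : Fin (k+3) → Fin m,
        (C.IsColoring c ∧ ∀ p ∈ ({(0, a), (1, b)} : Set (Fin (k+3) × Fin m)), c p.1 = p.2) ↔
          (Pp k m (fun i => (σ i).symm (c i)) ∧ (σ 0).symm (c 0) = j0 ∧ (σ 1).symm (c 1) = j1) := by
      intro c
      have hmem : (∀ p ∈ ({(0, a), (1, b)} : Set (Fin (k+3) × Fin m)), c p.1 = p.2) ↔
          (c 0 = a ∧ c 1 = b) := by simp
      rw [hmem]
      constructor
      · rintro ⟨hc, h0, h1⟩
        refine ⟨?_, by rw [h0], by rw [h1]⟩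
        intro i hi heq
        obtain ⟨j, hj, hj1, hj2⟩ := hsurj i
        have hjlt : j < k+2 := by
          rcases Nat.lt_or_ge j (k+2) with h | h
          · exact h
          · exact absurd (by rw [← hj1, show j = k+2 by omega, hvt0]) hi
        beta_reduce at heq
        have hstep := (hcol c).mp hc j (by omega)
        rw [hj1, hj2] at hstep
        apply hstep
        have hc2 : σ (i + 1) = M j * σ i := by
          have := hcomp j (by omega)
          rwa [hj1, hj2] at this
        calc c (i+1) = σ (i+1) ((σ (i+1)).symm (c (i+1))) := (Equiv.apply_symm_apply _ _).symm
          _ = σ (i+1) ((σ i).symm (c i)) := by rw [heq]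
          _ = M j (σ i ((σ i).symm (c i))) := by rw [hc2]; rfl
          _ = M j (c i) := by rw [Equiv.apply_symm_apply]
      · rintro ⟨hp, h0, h1⟩
        have h0' : c 0 = a := (σ 0).symm.injective (h0.trans hj0)
        have h1' : c 1 = b := (σ 1).symm.injective (h1.trans hj1def)
        refine ⟨(hcol c).mpr ?_, h0', h1'⟩
        intro j hj
        rcases Nat.lt_or_ge j (k+2) with hlt | hge
        · have hne0 := hvt_ne j hlt
          have hp' := hp (vt j) hne0
          rw [← hvt_succ j] at hp'
          intro heq
          apply hp'
          show (σ (vt (j+1))).symm (c (vt (j+1))) = (σ (vt j)).symm (c (vt j))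
          have hc2 := hcomp j (by omega)
          have hMs : σ (vt (j+1)) ((σ (vt j)).symm (c (vt j))) = M j (c (vt j)) := by
            rw [hc2]
            show M j (σ (vt j) ((σ (vt j)).symm _)) = _
            rw [Equiv.apply_symm_apply]
          rw [heq, ← hMs, Equiv.symm_apply_apply]
        · have hj' : j = k+2 := by omega
          subst hj'
          rw [hvt0, hvt1, h0', h1']
          exact hedge
    have hNC : NCount C ({(0, a), (1, b)} : Set (Fin (k+3) × Fin m)) =
        Nat.card {d : Fin (k+3) → Fin m // Pp k m d ∧ d 0 = j0 ∧ d 1 = j1} := by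
      rw [NCount]
      exact Nat.card_congr (colEquiv _ (fun d => Pp k m d ∧ d 0 = j0 ∧ d 1 = j1) σ main_iff)
    constructor
    · intro hne
      rw [hNC]
      have hprop : properCount (cycleGraph (k+3)) m =
          Nat.card {d : Fin (k+3) → Fin m // Pp k m d ∧ d 1 ≠ d 0} := by
        rw [properCount]
        refine Nat.card_congr (Equiv.subtypeEquivRight fun d => ?_)
        exact (cycle_proper_iff (k := k+1) d).trans (pp_split d)
      rw [hprop, pair_card (Pp k m) pp_inv 1 0 j1 j0 hne.symm]
      have hswap : Nat.card {d : Fin (k+3) → Fin m // Pp k m d ∧ d 1 = j1 ∧ d 0 = j0} =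
          Nat.card {d : Fin (k+3) → Fin m // Pp k m d ∧ d 0 = j0 ∧ d 1 = j1} :=
        Nat.card_congr (Equiv.subtypeEquivRight fun d => by tauto)
      rw [hswap, mul_comm]
    · intro heqc
      rw [hNC]
      have hn1 : k + 3 - 1 = k + 2 := rfl
      rw [hn1]
      have hprop2 : properCount (cycleGraph (k+2)) m =
          Nat.card {e : Fin (k+2) → Fin m // ∀ i : Fin (k+2), e (i+1) ≠ e i} := by
        rw [properCount]
        exact Nat.card_congr (Equiv.subtypeEquivRight fun e => cycle_proper_iff (k := k) e)
      rw [hprop2,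
        single_card (fun e : Fin (k+2) → Fin m => ∀ i : Fin (k+2), e (i+1) ≠ e i)
          (fun π e he i h => he i (π.injective h)) 0 j0]
      have hctr := Nat.card_congr (contractEquiv' (k := k) j0)
      rw [← heqc, ← hctr, mul_comm]
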